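/- Let E be a locally cartesian closed category with a strict initial object. If a composite g∘f and g are both dense monomorphisms, then f is a dense monomorphism. -/
import Mathlib


open CategoryTheory CategoryTheory.Limits

universe v u

/-- A locally cartesian closed category: each pullback functor `Over.pullback p`
has a right adjoint `Π_p`. -/
class LCC (C : Type u) [Category.{v} C] [HasPullbacks C] where
  Pi : ∀ {X Y : C} (p : X ⟶ Y), Over X ⥤ Over Y
  adj : ∀ {X Y : C} (p : X ⟶ Y), Over.pullback p ⊣ Pi p

variable {C : Type u} [Category.{v} C] [HasPullbacks C] [LCC C] [HasInitial C]

/-- The negation `¬p : B∖im p ⟶ B` of `p : E ⟶ B`, i.e. `Π_p (0 ⟶ E)`,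
the right edge of the distributivity pullback around `0 ⟶ E` and `p`. -/
noncomputable def neg {E B : C} (p : E ⟶ B) : Over B :=
  (LCC.Pi p).obj (Over.mk (initial.to E))

/-- The double negation `¬¬p` of `p : E ⟶ B`. -/
noncomputable def nneg {E B : C} (p : E ⟶ B) : Over B := neg (neg p).hom

/-- A dense monomorphism: a mono whose negation has initial domain. -/
def IsDenseMono {A B : C} (f : A ⟶ B) : Prop :=
  Mono f ∧ Nonempty (IsInitial ((neg f).left))

/-- In a locally cartesian closed category with a strict initial object, if `f ≫ g` and
`g` are dense monomorphisms then so is `f`. -/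
theorem denseMono_of_comp [HasStrictInitialObjects C]
    {A B D : C} (f : A ⟶ B) (g : B ⟶ D)
    (hfg : IsDenseMono (f ≫ g)) (hg : IsDenseMono g) : IsDenseMono f := by
  have hmonofg : Mono (f ≫ g) := hfg.1
  have hmonog : Mono g := hg.1
  have hmonof : Mono f := mono_of_mono f g
  refine ⟨hmonof, ?_⟩
  set N := neg f with hN
  set n : N.left ⟶ B := N.hom with hn
  -- counit gives a map from pullback of n along f to ⊥
  have counit := (LCC.adj f).counit.app (Over.mk (initial.to A))
  have c1 : pullback n f ⟶ (⊥_ C) := counit.left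
  -- hence pullback n f is initial
  haveI : IsIso c1 := initialIsInitial.isIso_to c1
  have hPinit : IsInitial (pullback n f) := initialIsInitial.ofIso (asIso c1).symm
  -- map from pullback (n ≫ g) (f ≫ g) to pullback n f
  have key : pullback.fst (n ≫ g) (f ≫ g) ≫ n = pullback.snd (n ≫ g) (f ≫ g) ≫ f := by
    have := pullback.condition (f := n ≫ g) (g := f ≫ g)
    rw [← Category.assoc, ← Category.assoc] at this
    exact (cancel_mono g).mp this
  have c2 : pullback (n ≫ g) (f ≫ g) ⟶ pullback n f :=
    pullback.lift _ _ key
  haveI : IsIso (c2 ≫ c1) := initialIsInitial.isIso_to _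
  have hQinit : IsInitial (pullback (n ≫ g) (f ≫ g)) :=
    initialIsInitial.ofIso (asIso (c2 ≫ c1)).symm
  -- Over A morphism from pullback of (n ≫ g) along (f ≫ g) to 0 → A
  have m : (Over.pullback (f ≫ g)).obj (Over.mk (n ≫ g)) ⟶ Over.mk (initial.to A) :=
    Over.homMk (hQinit.to (⊥_ C)) (hQinit.hom_ext _ _)
  -- adjunction
  have t : Over.mk (n ≫ g) ⟶ neg (f ≫ g) :=
    ((LCC.adj (f ≫ g)).homEquiv _ _) m
  obtain ⟨hI⟩ := hfg.2
  have c3 : N.left ⟶ (⊥_ C) := t.left ≫ hI.to (⊥_ C)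
  haveI : IsIso c3 := initialIsInitial.isIso_to c3
  exact ⟨initialIsInitial.ofIso (asIso c3).symm⟩
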